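/- Let (η, ε) : f ⊣ f* : B → A be an adjunction in a bicategory with η monomorphic in [A,A], and let h : A → A be an invertible 1-cell. If there is an isomorphism σ : f ∘ h → f in [A,B], then the 2-cell i_h := (f* ◦ σ) · (η ◦ h) : h → f* ∘ f is a monomorphism, and the composite (f* ∘ f) ∘ h → f* ∘ f induced by multiplication of the ring S_f = f* ∘ f is an isomorphism. -/
import Mathlib


open CategoryTheory CategoryTheory.Bicategory

section

variable {B : Type*} [Bicategory B] {a b : B}

/-- Whiskering on the left by a 1-cell with a left inverse (up to iso) is injective
on 2-cells. -/
lemma whiskerLeft_inj' {c : B} {k k' : a ⟶ a} (w : k' ≫ k ≅ 𝟙 a) {x y : a ⟶ c}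
    {u v : x ⟶ y} (H : k ◁ u = k ◁ v) : u = v := by
  have H2 : (k' ≫ k) ◁ u = (k' ≫ k) ◁ v := by
    rw [comp_whiskerLeft, comp_whiskerLeft, H]
  have H3 : (w.hom ▷ x) ≫ (𝟙 a ◁ u) = (w.hom ▷ x) ≫ (𝟙 a ◁ v) := by
    rw [← whisker_exchange, ← whisker_exchange, H2]
  have H4 : (𝟙 a ◁ u) = (𝟙 a ◁ v) := (cancel_epi _).mp H3
  simpa [id_whiskerLeft, cancel_epi, cancel_mono] using H4

/-- Whiskering a mono on the left by a 1-cell isomorphic to the identity yields a mono. -/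
lemma mono_whiskerLeft_of_iso_id' {c : B} {k : a ⟶ a} (w : k ≅ 𝟙 a) {x y : a ⟶ c}
    (η : x ⟶ y) [Mono η] : Mono (k ◁ η) := by
  have key : k ◁ η = (w.hom ▷ x) ≫ (𝟙 a ◁ η) ≫ (w.inv ▷ y) := by
    rw [← Category.assoc, ← whisker_exchange]; simp
  rw [key, id_whiskerLeft]
  infer_instance

/-- Whiskering a mono on the left by an invertible 1-cell yields a mono. -/
lemma mono_whiskerLeft' {c : B} {k k' : a ⟶ a} (e₁ : k ≫ k' ≅ 𝟙 a) (e₂ : k' ≫ k ≅ 𝟙 a)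
    {x y : a ⟶ c} (η : x ⟶ y) [Mono η] : Mono (k ◁ η) := by
  constructor
  intro z u v H
  have key : k' ◁ (k ◁ η) = (α_ k' k x).inv ≫ ((k' ≫ k) ◁ η) ≫ (α_ k' k y).hom := by
    simp [comp_whiskerLeft]
  haveI : Mono ((k' ≫ k) ◁ η) := mono_whiskerLeft_of_iso_id' e₂ η
  haveI : Mono (k' ◁ (k ◁ η)) := by rw [key]; infer_instance
  have H2 : k' ◁ u ≫ k' ◁ (k ◁ η) = k' ◁ v ≫ k' ◁ (k ◁ η) := by
    rw [← Bicategory.whiskerLeft_comp, ← Bicategory.whiskerLeft_comp, H]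
  exact whiskerLeft_inj' e₁ ((cancel_mono _).mp H2)

/-- The 2-cell `i_h : h ⟶ h ≫ (f ≫ fs)` obtained from an isomorphism
`σ : h ≫ f ≅ f` and the unit of an adjunction `f ⊣ fs`:
`h ≅ h ≫ 𝟙 a ⟶ h ≫ (f ≫ fs) ≅ (h ≫ f) ≫ fs ⟶ f ≫ fs`
(in classical notation, `(f* ◦ σ) · (η ◦ h)`). -/
noncomputable def liftCell {f : a ⟶ b} {fs : b ⟶ a} (adj : Bicategory.Adjunction f fs)
    (h : a ⟶ a) (σ : h ≫ f ≅ f) : h ⟶ f ≫ fs :=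
  (ρ_ h).inv ≫ (h ◁ adj.unit) ≫ (α_ h f fs).inv ≫ (σ.hom ▷ fs)

/-- The 2-cell `ξ^l_{i} : h ≫ (f ≫ fs) ⟶ f ≫ fs` induced by the multiplication of
the monoid `S_f = f ≫ fs`, for a 2-cell `i : h ⟶ f ≫ fs`; namely
`(f* ◦ ξ_i) ∘ α` where `ξ_i = (ε ◦ f)·(f ◦ i)`. -/
noncomputable def xiL {f : a ⟶ b} {fs : b ⟶ a} (adj : Bicategory.Adjunction f fs)
    (h : a ⟶ a) (i : h ⟶ f ≫ fs) : h ≫ (f ≫ fs) ⟶ f ≫ fs :=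
  (α_ h f fs).inv ≫
    ((i ▷ f ≫ (α_ f fs f).hom ≫ (f ◁ adj.counit) ≫ (ρ_ f).hom) ▷ fs)

/-- The zig-zag composite attached to `liftCell adj h σ` is just `σ.hom`,
by the triangle identity. -/
lemma liftCell_zig {f : a ⟶ b} {fs : b ⟶ a} (adj : Bicategory.Adjunction f fs)
    (h : a ⟶ a) (σ : h ≫ f ≅ f) :
    (liftCell adj h σ ▷ f) ≫ (α_ f fs f).hom ≫ (f ◁ adj.counit) ≫ (ρ_ f).hom = σ.hom := by
  have tri := adj.left_triangle
  calc (liftCell adj h σ ▷ f) ≫ (α_ f fs f).hom ≫ (f ◁ adj.counit) ≫ (ρ_ f).hom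
      = 𝟙 _ ⊗≫ h ◁ (leftZigzag adj.unit adj.counit) ⊗≫ σ.hom ▷ (𝟙 b) ≫ (ρ_ f).hom := by
        simp only [liftCell, leftZigzag, comp_whiskerRight, Category.assoc]
        rw [associator_naturality_left_assoc, ← whisker_exchange_assoc]
        bicategory
    _ = σ.hom := by
        rw [tri, rightUnitor_naturality]
        bicategory

/-- Proposition: if `η` is a monomorphism in `[a,a]`, `h` is an invertible 1-cell
and `σ : h ≫ f ≅ f` is an isomorphism, then `i_h := (f* ◦ σ)·(η ◦ h)` is a
monomorphism and `ξ^l_{i_h}` is an isomorphism (i.e. `[(h, i_h)] ∈ 𝔗^{A,l}_f`). -/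
theorem liftCell_mono_and_xiL_isIso {f : a ⟶ b} {fs : b ⟶ a}
    (adj : Bicategory.Adjunction f fs) (hmono : Mono adj.unit)
    (h h' : a ⟶ a) (e₁ : h ≫ h' ≅ 𝟙 a) (e₂ : h' ≫ h ≅ 𝟙 a)
    (σ : h ≫ f ≅ f) :
    Mono (liftCell adj h σ) ∧ IsIso (xiL adj h (liftCell adj h σ)) := by
  constructor
  · haveI := hmono
    haveI : Mono (h ◁ adj.unit) := mono_whiskerLeft' e₁ e₂ adj.unit
    unfold liftCell
    infer_instance
  · have key : xiL adj h (liftCell adj h σ) = (α_ h f fs).inv ≫ (σ.hom ▷ fs) := by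
      rw [xiL, liftCell_zig]
    rw [key]
    infer_instance

end
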